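/- Let N be a finite set, b0 > 0 a real, and for each i in N let a_i ≥ 0 and b_i > 0. Define h(S) = (Σ_{i∈S} a_i)/(b0 + Σ_{i∈S} b_i) for S ⊆ N. Then for any S ⊆ N and distinct i, j ∉ S, the submodularity inequality h(S∪{i,j}) - h(S∪{j}) ≤ h(S∪{i}) - h(S) holds if and only if h(S∪{i}) + h(S∪{j}) ≤ a_i/b_i + a_j/b_j. -/
import Mathlib

lemma key_ratio (A B ai aj bi bj : ℝ) (hB : 0 < B) (hbi : 0 < bi) (hbj : 0 < bj) :
    (ai + (aj + A)) / (B + (bi + bj)) - (aj + A) / (B + bj) ≤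
      (ai + A) / (B + bi) - A / B ↔
      (ai + A) / (B + bi) + (aj + A) / (B + bj) ≤ ai / bi + aj / bj := by
  rw [div_sub_div _ _ (by positivity) (by positivity),
      div_sub_div _ _ (by positivity) hB.ne',
      div_le_div_iff₀ (by positivity) (by positivity),
      div_add_div _ _ (by positivity) (by positivity),
      div_add_div _ _ hbi.ne' hbj.ne',
      div_le_div_iff₀ (by positivity) (by positivity)]
  constructor <;> intro hh <;> nlinarith [hh]

theorem stmt_0 {ι : Type*} [DecidableEq ι] (N : Finset ι) (a b : ι → ℝ) (b0 : ℝ)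
    (hb0 : 0 < b0) (ha : ∀ i ∈ N, 0 ≤ a i) (hb : ∀ i ∈ N, 0 < b i)
    (h : Finset ι → ℝ)
    (hdef : ∀ S : Finset ι, h S = (∑ i ∈ S, a i) / (b0 + ∑ i ∈ S, b i))
    (S : Finset ι) (hSN : S ⊆ N) (i j : ι) (hi : i ∈ N) (hj : j ∈ N)
    (hiS : i ∉ S) (hjS : j ∉ S) (hij : i ≠ j) :
    h (insert i (insert j S)) - h (insert j S) ≤ h (insert i S) - h S ↔
      h (insert i S) + h (insert j S) ≤ a i / b i + a j / b j := by
  have hiJS : i ∉ insert j S := by simp [hij, hiS]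
  have hB : 0 < b0 + ∑ k ∈ S, b k :=
    add_pos_of_pos_of_nonneg hb0 (Finset.sum_nonneg fun k hk => (hb k (hSN hk)).le)
  have key := key_ratio (∑ k ∈ S, a k) (b0 + ∑ k ∈ S, b k) (a i) (a j) (b i) (b j)
    hB (hb i hi) (hb j hj)
  simp only [hdef, Finset.sum_insert hiS, Finset.sum_insert hjS, Finset.sum_insert hiJS]
  convert key using 3 <;> ring
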